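/- Let H ~ χ²_s(γ) be noncentral chi-squared with s degrees of freedom and noncentrality γ, and let α, β, y > 0. If γ ≥ 4y + β + s(α − 1) + 2√(y((2α − 1)s + 2β + 4y)), then P(H > β + sα) ≥ 1 − exp(−y). -/

import Mathlib

open MeasureTheory ProbabilityTheory Real
open scoped NNReal ENNReal

private lemma log_quad {u : ℝ} (hu : 0 ≤ u) : u - u ^ 2 / 2 ≤ Real.log (1 + u) := by
  set f : ℝ → ℝ := fun v => Real.log (1 + v) - v + v ^ 2 / 2 with hf
  have hder : ∀ x : ℝ, 0 ≤ x → HasDerivAt f ((1 + x)⁻¹ - 1 + x) x := by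
    intro x hx
    have h1 : HasDerivAt (fun v : ℝ => 1 + v) 1 x := by
      simpa using (hasDerivAt_id x).const_add (1 : ℝ)
    have h2 : HasDerivAt (fun v : ℝ => Real.log (1 + v)) (1 / (1 + x)) x :=
      h1.log (by positivity)
    have h3 : HasDerivAt (fun v : ℝ => v ^ 2 / 2) x x := by
      have := (hasDerivAt_pow 2 x).div_const 2
      norm_num at this
      simpa using this
    have := (h2.sub (hasDerivAt_id x)).add h3
    simp only [one_div] at this
    exact this
  have hmono : MonotoneOn f (Set.Ici 0) := by
    refine monotoneOn_of_deriv_nonneg (convex_Ici 0) ?_ ?_ ?_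
    · intro x hx
      exact ((hder x hx).continuousAt).continuousWithinAt
    · intro x hx
      rw [interior_Ici] at hx
      exact ((hder x (le_of_lt hx)).differentiableAt).differentiableWithinAt
    · intro x hx
      rw [interior_Ici] at hx
      rw [(hder x hx.le).deriv]
      have h1 : (0:ℝ) < 1 + x := by linarith [hx.out]
      have h2 : (1 + x)⁻¹ - 1 + x = x ^ 2 / (1 + x) := by field_simp; ring
      rw [h2]; positivity
  have h0 : f 0 ≤ f u := hmono (by simp) (by simpa using hu) hu
  simp only [hf] at h0
  norm_num at h0
  linarith

private lemma gauss_sq_int (c aa : ℝ) (hc : c < 1 / 2) :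
    ∫ x, Real.exp (c * (x + aa) ^ 2) ∂(gaussianReal 0 1) =
      Real.exp (c * aa ^ 2 / (1 - 2 * c)) / Real.sqrt (1 - 2 * c) := by
  have h2c : (0:ℝ) < 1 - 2 * c := by linarith
  set b : ℝ := 1 / 2 - c with hbdef
  have hb : (0:ℝ) < b := by rw [hbdef]; linarith
  set m : ℝ := aa * c / b with hmdef
  rw [gaussianReal_of_var_ne_zero 0 one_ne_zero]
  rw [show gaussianPDF 0 1 = fun x => ((Real.toNNReal (gaussianPDFReal 0 1 x) : ℝ≥0) : ℝ≥0∞)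
    from rfl]
  rw [integral_withDensity_eq_integral_smul ((measurable_gaussianPDFReal 0 1).real_toNNReal) _]
  have hpt : (fun x => (Real.toNNReal (gaussianPDFReal 0 1 x) : ℝ≥0) • Real.exp (c * (x + aa) ^ 2))
      = fun x => (Real.sqrt (2 * π))⁻¹ * (Real.exp (c * aa ^ 2 / (1 - 2 * c)) *
          Real.exp (-(b * (x - m) ^ 2))) := by
    funext x
    rw [NNReal.smul_def, Real.coe_toNNReal _ (gaussianPDFReal_nonneg 0 1 x)]
    rw [gaussianPDFReal]
    push_cast
    have hK2 : Real.sqrt (2 * π * 1) = Real.sqrt (2 * π) := by norm_num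
    rw [smul_eq_mul, hK2, mul_assoc, ← Real.exp_add, ← Real.exp_add]
    congr 1
    rw [Real.exp_eq_exp]
    have hbne : b ≠ 0 := ne_of_gt hb
    rw [hmdef, hbdef]
    field_simp
    ring
  rw [hpt]
  rw [integral_const_mul, integral_const_mul]
  rw [show (fun x : ℝ => Real.exp (-(b * (x - m) ^ 2))) = fun x : ℝ => Real.exp (-b * (x - m) ^ 2)
    from funext fun x => by ring_nf]
  rw [integral_sub_right_eq_self (fun x : ℝ => Real.exp (-b * x ^ 2)) m]
  rw [integral_gaussian]
  have hfin : (Real.sqrt (2 * π))⁻¹ * Real.sqrt (π / b) = (Real.sqrt (1 - 2 * c))⁻¹ := by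
    have hπ : (0:ℝ) < π := Real.pi_pos
    have harg : (2 * π)⁻¹ * (π / b) = (1 - 2 * c)⁻¹ := by
      rw [hbdef]
      field_simp
      try ring
      try exact Or.inl trivial
      try tauto
    rw [← Real.sqrt_inv, ← Real.sqrt_mul (by positivity : (0:ℝ) ≤ (2 * π)⁻¹), harg,
      Real.sqrt_inv]
  calc (Real.sqrt (2 * π))⁻¹ * (Real.exp (c * aa ^ 2 / (1 - 2 * c)) * Real.sqrt (π / b))
      = Real.exp (c * aa ^ 2 / (1 - 2 * c)) * ((Real.sqrt (2 * π))⁻¹ * Real.sqrt (π / b)) := by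
        ring
    _ = Real.exp (c * aa ^ 2 / (1 - 2 * c)) * (Real.sqrt (1 - 2 * c))⁻¹ := by rw [hfin]
    _ = _ := (div_eq_mul_inv _ _).symm

private lemma iIndepFun_congr_ae {Ω ι : Type*} [MeasurableSpace Ω] {μ : Measure Ω}
    {f g : ι → Ω → ℝ}
    (hf : iIndepFun f μ) (h : ∀ i, f i =ᵐ[μ] g i) :
    iIndepFun g μ := by
  rw [iIndepFun_iff_measure_inter_preimage_eq_mul] at hf ⊢
  intro S sets hsets
  have hpre : ∀ i, f i ⁻¹' sets i =ᵐ[μ] g i ⁻¹' sets i := fun i => (h i).fun_comp (sets i)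
  have hint : (⋂ i ∈ S, f i ⁻¹' sets i) =ᵐ[μ] ⋂ i ∈ S, g i ⁻¹' sets i := by
    rw [Filter.eventuallyEq_set]
    have hall : ∀ᵐ ω ∂μ, ∀ i ∈ S, f i ω = g i ω := by
      rw [Filter.eventually_all_finset]
      exact fun i _ => h i
    filter_upwards [hall] with ω hω
    simp only [Set.mem_iInter, Set.mem_preimage]
    exact ⟨fun hh i hi => (hω i hi) ▸ hh i hi, fun hh i hi => (hω i hi).symm ▸ hh i hi⟩
  rw [← measure_congr hint, hf S hsets]
  exact Finset.prod_congr rfl fun i _ => measure_congr (hpre i)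

set_option maxHeartbeats 2000000 in
/-- Sparse-change power bound: if `H ~ χ²_s(γ)` with
`γ ≥ 4y + β + s(α - 1) + 2√(y((2α - 1)s + 2β + 4y))`,
then `P(H > β + sα) ≥ 1 - exp(-y)`. -/
theorem noncentral_chisq_sparse_power
    {Ω : Type*} [MeasureSpace Ω] [IsProbabilityMeasure (ℙ : Measure Ω)]
    (s : ℕ) (Z : Fin s → Ω → ℝ)
    (hindep : iIndepFun Z ℙ)
    (hlaw : ∀ i, Measure.map (Z i) ℙ = gaussianReal 0 1)
    (a : Fin s → ℝ) (γ : ℝ) (hγdef : ∑ i, (a i) ^ 2 = γ)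
    (H : Ω → ℝ) (hH : ∀ ω, H ω = ∑ i, (Z i ω + a i) ^ 2)
    (α β y : ℝ) (hα : 0 < α) (hβ : 0 < β) (hy : 0 < y)
    (hγ : γ ≥ 4 * y + β + s * (α - 1) +
      2 * Real.sqrt (y * ((2 * α - 1) * s + 2 * β + 4 * y))) :
    ENNReal.ofReal (1 - Real.exp (-y)) ≤ ℙ {ω | β + s * α < H ω} := by
  classical
  have hγ0 : 0 ≤ γ := hγdef ▸ Finset.sum_nonneg fun i _ => sq_nonneg _
  have hsq0 : 0 ≤ Real.sqrt (y * ((2 * α - 1) * s + 2 * β + 4 * y)) := Real.sqrt_nonneg _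
  rcases Nat.eq_zero_or_pos s with h0 | hspos
  · exfalso
    subst h0
    have hγz : γ = 0 := by simpa using hγdef.symm
    rw [hγz] at hγ
    push_cast at hγ
    linarith [Real.sqrt_nonneg (y * ((2 * α - 1) * 0 + 2 * β + 4 * y))]
  have hs1 : (1:ℝ) ≤ (s:ℝ) := by exact_mod_cast hspos
  set T : ℝ := β + (s:ℝ) * α with hTdef
  set d : ℝ := (s:ℝ) + γ - T with hddef
  set V : ℝ := (s:ℝ) + 2 * γ with hVdef
  have hd4y : 4 * y ≤ d := by
    rw [hddef, hTdef]; linarith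
  have hdpos : 0 < d := by linarith
  have hVpos : 0 < V := by rw [hVdef]; linarith
  have hkey : 4 * y * V ≤ d ^ 2 := by
    set I : ℝ := (2 * α - 1) * s + 2 * β + 4 * y with hIdef
    rcases le_or_gt 0 (y * I) with hyI | hyI
    · have h1 : Real.sqrt (y * I) ^ 2 = y * I := Real.sq_sqrt hyI
      have hw : 2 * Real.sqrt (y * I) ≤ d - 4 * y := by
        rw [hddef, hTdef]; linarith
      have hprod : 0 ≤ (d - 4 * y - 2 * Real.sqrt (y * I)) * (d - 4 * y + 2 * Real.sqrt (y * I)) :=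
        mul_nonneg (by linarith) (by linarith)
      have hw2 : 4 * (y * I) ≤ (d - 4 * y) ^ 2 := by nlinarith [h1, hprod]
      rw [hVdef]
      rw [hddef, hTdef] at hw2 ⊢
      rw [hIdef] at hw2
      nlinarith [hw2]
    · have hw2 : 4 * (y * I) ≤ (d - 4 * y) ^ 2 := by nlinarith [sq_nonneg (d - 4 * y)]
      rw [hVdef]
      rw [hddef, hTdef] at hw2 ⊢
      rw [hIdef] at hw2
      nlinarith [hw2]
  set lam : ℝ := d / (2 * V) with hlamdef
  have hlampos : 0 < lam := div_pos hdpos (by linarith)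
  have h1lam : (0:ℝ) < 1 + 2 * lam := by linarith
  have hlamV : lam * V = d / 2 := by
    rw [hlamdef]; field_simp
  have hlamd : 2 * y ≤ lam * d := by
    rw [hlamdef, div_mul_eq_mul_div, le_div_iff₀ (by positivity)]
    nlinarith [hkey]
  -- measurable versions of the Z i
  have hZae : ∀ i, AEMeasurable (Z i) ℙ := by
    intro i
    by_contra hcon
    have h0 := hlaw i
    rw [Measure.map_of_not_aemeasurable hcon] at h0
    have h1 := congrArg (fun μ => μ Set.univ) h0
    simp [measure_univ] at h1
  set Z' : Fin s → Ω → ℝ := fun i => (hZae i).mk (Z i) with hZ'def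
  have hZ'meas : ∀ i, Measurable (Z' i) := fun i => (hZae i).measurable_mk
  have hZ'ae : ∀ i, Z i =ᵐ[ℙ] Z' i := fun i => (hZae i).ae_eq_mk
  have hmap' : ∀ i, Measure.map (Z' i) ℙ = gaussianReal 0 1 := fun i => by
    rw [← Measure.map_congr (hZ'ae i)]; exact hlaw i
  have hindep' : iIndepFun Z' ℙ := iIndepFun_congr_ae hindep hZ'ae
  set X : Fin s → Ω → ℝ := fun i => (fun x => (x + a i) ^ 2) ∘ Z' i with hXdef
  have hφmeas : ∀ i : Fin s, Measurable fun x : ℝ => (x + a i) ^ 2 := fun i =>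
    (measurable_id.add_const _).pow_const 2
  have hXmeas : ∀ i, Measurable (X i) := fun i => (hφmeas i).comp (hZ'meas i)
  have hXindep : iIndepFun X ℙ := hindep'.comp _ hφmeas
  set Sf : Ω → ℝ := ∑ i, X i with hSfdef
  have hSfval : ∀ ω, Sf ω = ∑ i, (Z' i ω + a i) ^ 2 := fun ω => by
    rw [hSfdef]
    simp [Finset.sum_apply, hXdef, Function.comp]
  have hSfeq : Sf = fun ω => ∑ i, X i ω := by
    funext ω; rw [hSfdef]; exact Finset.sum_apply _ _ _
  have hSfmeas : Measurable Sf := by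
    rw [hSfeq]; exact Finset.measurable_sum _ fun i _ => hXmeas i
  have hSfnn : ∀ ω, 0 ≤ Sf ω := fun ω => by
    rw [hSfval]; exact Finset.sum_nonneg fun i _ => sq_nonneg _
  have hHS : H =ᵐ[ℙ] Sf := by
    have hall : ∀ᵐ ω ∂ℙ, ∀ i, Z i ω = Z' i ω := by
      rw [MeasureTheory.ae_all_iff]; exact hZ'ae
    filter_upwards [hall] with ω hω
    rw [hH ω, hSfval ω]
    exact Finset.sum_congr rfl fun i _ => by rw [hω i]
  -- mgf computations
  have hmgfX : ∀ i, mgf (X i) ℙ (-lam)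
      = Real.exp (-lam * (a i) ^ 2 / (1 + 2 * lam)) / Real.sqrt (1 + 2 * lam) := by
    intro i
    have hcont : Continuous fun x : ℝ => Real.exp (-lam * (x + a i) ^ 2) :=
      Real.continuous_exp.comp (continuous_const.mul ((continuous_id.add continuous_const).pow 2))
    have h1 : mgf (X i) ℙ (-lam) = ∫ ω, Real.exp (-lam * (Z' i ω + a i) ^ 2) ∂ℙ := rfl
    rw [h1, ← integral_map (hZ'meas i).aemeasurable hcont.aestronglyMeasurable, hmap' i,
      gauss_sq_int (-lam) (a i) (by linarith)]
    have h2 : (1:ℝ) - 2 * (-lam) = 1 + 2 * lam := by ring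
    rw [h2]
  have hmgfSf : mgf Sf ℙ (-lam)
      = Real.exp (-lam * γ / (1 + 2 * lam)) / (Real.sqrt (1 + 2 * lam)) ^ (s : ℕ) := by
    rw [hSfdef, hXindep.mgf_sum hXmeas]
    rw [Finset.prod_congr rfl fun i _ => hmgfX i]
    rw [Finset.prod_div_distrib, Finset.prod_const, Finset.card_univ, Fintype.card_fin,
      ← Real.exp_sum]
    congr 2
    rw [← Finset.sum_div, ← Finset.mul_sum, hγdef]
  -- integrability
  have hint : Integrable (fun ω => Real.exp (-lam * Sf ω)) ℙ := by
    refine Integrable.mono' (integrable_const (1:ℝ))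
      ((hSfmeas.const_mul (-lam)).exp.aestronglyMeasurable) (ae_of_all _ fun ω => ?_)
    rw [Real.norm_eq_abs, Real.abs_exp]
    exact Real.exp_le_one_iff.mpr
      (mul_nonpos_of_nonpos_of_nonneg (neg_nonpos.mpr hlampos.le) (hSfnn ω))
  -- Chernoff
  have hcher := measure_le_le_exp_mul_mgf (μ := ℙ) (X := Sf) T (neg_nonpos.mpr hlampos.le) hint
  -- numeric bound
  have hlog : 2 * lam - 2 * lam ^ 2 ≤ Real.log (1 + 2 * lam) := by
    have h := log_quad (u := 2 * lam) (by linarith)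
    nlinarith [h]
  have hpow : (Real.sqrt (1 + 2 * lam)) ^ (s : ℕ)
      = Real.exp ((s:ℝ) * (Real.log (1 + 2 * lam) / 2)) := by
    rw [← Real.exp_log (Real.sqrt_pos.mpr h1lam), ← Real.exp_nat_mul,
      Real.log_sqrt h1lam.le]
  have hnum : Real.exp (-(-lam) * T) * mgf Sf ℙ (-lam) ≤ Real.exp (-y) := by
    rw [hmgfSf, hpow, div_eq_mul_inv, ← Real.exp_neg, ← Real.exp_add, ← Real.exp_add]
    apply Real.exp_le_exp.mpr
    have hfrac : lam * γ - 2 * lam ^ 2 * γ ≤ lam * γ / (1 + 2 * lam) := by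
      rw [le_div_iff₀ h1lam]
      nlinarith [hγ0, hlampos.le,
        mul_nonneg (mul_nonneg (mul_nonneg hlampos.le hlampos.le) hlampos.le) hγ0]
    have hslog : (s:ℝ) * (2 * lam - 2 * lam ^ 2) ≤ (s:ℝ) * Real.log (1 + 2 * lam) :=
      mul_le_mul_of_nonneg_left hlog (by positivity)
    have hgoal : lam * T - (lam * γ - 2 * lam ^ 2 * γ) - (s:ℝ) * (2 * lam - 2 * lam ^ 2) / 2
        = -(lam * d) + lam ^ 2 * V := by
      rw [hddef, hVdef]; ring
    have e1 : lam ^ 2 * V = lam * (d / 2) := by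
      calc lam ^ 2 * V = lam * (lam * V) := by ring
        _ = lam * (d / 2) := by rw [hlamV]
    have hmain : lam * T - (lam * γ - 2 * lam ^ 2 * γ)
        - (s:ℝ) * (2 * lam - 2 * lam ^ 2) / 2 ≤ -y := by
      rw [hgoal, e1]; nlinarith [hlamd]
    have hfr2 : -(lam * γ / (1 + 2 * lam)) ≤ -(lam * γ - 2 * lam ^ 2 * γ) := by linarith
    have hsl2 : -((s:ℝ) * (Real.log (1 + 2 * lam) / 2))
        ≤ -((s:ℝ) * (2 * lam - 2 * lam ^ 2) / 2) := by linarith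
    have hexpand : -(-lam) * T + (-lam * γ / (1 + 2 * lam)
        + -((s:ℝ) * (Real.log (1 + 2 * lam) / 2)))
        = lam * T + -(lam * γ / (1 + 2 * lam)) + -((s:ℝ) * (Real.log (1 + 2 * lam) / 2)) := by
      ring
    linarith [hfr2, hsl2, hmain]
  -- put together
  have hAtop : ℙ {ω | Sf ω ≤ T} ≠ ⊤ := measure_ne_top _ _
  have hA : ℙ {ω | Sf ω ≤ T} ≤ ENNReal.ofReal (Real.exp (-y)) := by
    rw [← ENNReal.ofReal_toReal hAtop]
    exact ENNReal.ofReal_le_ofReal (hcher.trans hnum)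
  have hAH : ℙ {ω | H ω ≤ T} = ℙ {ω | Sf ω ≤ T} := by
    refine measure_congr ?_
    rw [Filter.eventuallyEq_set]
    filter_upwards [hHS] with ω hω
    simp [Set.mem_setOf_eq, hω]
  have hU : (1:ℝ≥0∞) ≤ ℙ {ω | H ω ≤ T} + ℙ {ω | T < H ω} := by
    rw [← measure_univ (μ := (ℙ : Measure Ω))]
    refine le_trans (measure_mono ?_) (measure_union_le _ _)
    intro ω _
    rcases le_or_gt (H ω) T with h | h
    · exact Or.inl h
    · exact Or.inr h
  have h2 : (1:ℝ≥0∞) ≤ ENNReal.ofReal (Real.exp (-y)) + ℙ {ω | T < H ω} :=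
    le_trans hU (add_le_add (hAH ▸ hA) le_rfl)
  have hfinal : ENNReal.ofReal (1 - Real.exp (-y)) ≤ ℙ {ω | T < H ω} := by
    rw [ENNReal.ofReal_sub _ (Real.exp_pos _).le, ENNReal.ofReal_one]
    exact tsub_le_iff_left.mpr h2
  exact hfinal
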